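/- arXiv:2109.09136 — 5 statements merged into one kernel-verified Lean document; each statement's English description precedes it below -/
import Mathlib

section
/- Saturation property: Let ω ∈ (0,1], let w ∈ H and Λ ⊆ 𝒥 be finite with supp w ⊆ Λ and ‖(B w − f)|_Λ‖ ≥ ω‖B w − f‖, and let u_Λ be the Galerkin solution on Λ, i.e., supp u_Λ ⊆ Λ and (B u_Λ − f)|_Λ = 0. Then ‖u − u_Λ‖_B ≤ (1 − ω²/κ(B))^{1/2} ‖u − w‖_B. -/
open scoped RealInnerProductSpace

open Classical in
/-- Coordinatewise restriction of an element of `ℓ²(𝒥)` to a subset `Λ ⊆ 𝒥`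
(entries outside `Λ` set to zero). -/
noncomputable def restr {J : Type*} (Λ : Set J) (v : lp (fun _ : J => ℝ) 2) :
    lp (fun _ : J => ℝ) 2 :=
  ⟨fun i => if i ∈ Λ then v i else 0, by
    have hv : Memℓp (fun i => v i) 2 := lp.memℓp v
    have : Memℓp (fun i => if i ∈ Λ then v i else 0) 2 := by
      rw [memℓp_gen_iff (by norm_num)] at hv ⊢
      refine Summable.of_nonneg_of_le (fun i => ?_) (fun i => ?_) hv
      · positivity
      · by_cases h : i ∈ Λ <;> simp [h] <;> positivity
    exact this⟩

open Classical in
lemma restr_apply {J : Type*} (S : Set J) (v : lp (fun _ : J => ℝ) 2) (i : J) :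
    restr S v i = if i ∈ S then v i else 0 := rfl

/-- Cauchy–Schwarz for the bilinear form induced by a positive symmetric operator. -/
lemma csB_aux {J : Type*}
    (B : lp (fun _ : J => ℝ) 2 →L[ℝ] lp (fun _ : J => ℝ) 2)
    (hsa : ∀ x y, ⟪B x, y⟫ = ⟪x, B y⟫)
    (hpos : ∀ v, (0:ℝ) ≤ ⟪B v, v⟫) (x y : lp (fun _ : J => ℝ) 2) :
    ⟪B x, y⟫ ^ 2 ≤ ⟪B x, x⟫ * ⟪B y, y⟫ := by
  have hyx : ⟪B y, x⟫ = ⟪B x, y⟫ := by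
    rw [hsa]; exact real_inner_comm _ _
  have h : ∀ t : ℝ, 0 ≤ ⟪B y, y⟫ * (t * t) + (2 * ⟪B x, y⟫) * t + ⟪B x, x⟫ := by
    intro t
    have e : B (t • y + x) = t • B y + B x := by simp [map_add, map_smul]
    have := hpos (t • y + x)
    rw [e, inner_add_left, inner_add_right, inner_add_right, real_inner_smul_left,
      real_inner_smul_left, real_inner_smul_right, real_inner_smul_right, hyx] at this
    nlinarith [this]
  have hd := discrim_le_zero h
  rw [discrim] at hd
  nlinarith [hd]

set_option maxHeartbeats 1000000 in
/-- **Saturation property** (Lemma 3.1 of the paper).  Let `B` be a bounded self-adjoint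
operator on `H = ℓ²(𝒥)` with `r_B‖v‖² ≤ ⟨Bv,v⟩ ≤ R_B‖v‖²`, boundedly invertible with
inverse `Binv`, `κ(B) = ‖B‖·‖B⁻¹‖`, and `u = B⁻¹f`.  Let `ω ∈ (0,1]`, let `w ∈ H` and
`Λ ⊆ 𝒥` be finite with `supp w ⊆ Λ` and `‖(Bw − f)|_Λ‖ ≥ ω‖Bw − f‖`, and let `u_Λ` be
the Galerkin solution on `Λ`.  Then `‖u − u_Λ‖_B ≤ (1 − ω²/κ(B))^{1/2}‖u − w‖_B`. -/
theorem stmt_4 {J : Type*} [Countable J]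
    (B Binv : lp (fun _ : J => ℝ) 2 →L[ℝ] lp (fun _ : J => ℝ) 2)
    (rB RB : ℝ) (hrB : 0 < rB) (hrRB : rB ≤ RB)
    (hsa : ∀ x y, ⟪B x, y⟫ = ⟪x, B y⟫)
    (hell : ∀ v, rB * ‖v‖ ^ 2 ≤ ⟪B v, v⟫ ∧ ⟪B v, v⟫ ≤ RB * ‖v‖ ^ 2)
    (hinv1 : Binv.comp B = ContinuousLinearMap.id ℝ _)
    (hinv2 : B.comp Binv = ContinuousLinearMap.id ℝ _)
    (f u : lp (fun _ : J => ℝ) 2) (hu : B u = f)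
    (ω : ℝ) (hω0 : 0 < ω) (hω1 : ω ≤ 1)
    (w : lp (fun _ : J => ℝ) 2) (Λ : Finset J)
    (hsupp : ∀ i : J, i ∉ Λ → w i = 0)
    (hdoerfler : ω * ‖B w - f‖ ≤ ‖restr (↑Λ) (B w - f)‖)
    (uΛ : lp (fun _ : J => ℝ) 2)
    (huΛsupp : ∀ i : J, i ∉ Λ → uΛ i = 0)
    (huΛ : ∀ i ∈ Λ, (B uΛ) i = f i) :
    Real.sqrt ⟪B (u - uΛ), u - uΛ⟫ ≤
      Real.sqrt (1 - ω ^ 2 / (‖B‖ * ‖Binv‖)) * Real.sqrt ⟪B (u - w), u - w⟫ := by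
  have hpos : ∀ v, (0:ℝ) ≤ ⟪B v, v⟫ := fun v =>
    le_trans (by positivity) (hell v).1
  have hinv1' : ∀ x, Binv (B x) = x := fun x => by
    have := congrArg (fun T => T x) hinv1; simpa using this
  -- trivial case: if B or Binv is the zero map, the whole space is trivial
  by_cases hB0 : ‖B‖ * ‖Binv‖ = 0
  · have htriv : ∀ x : lp (fun _ : J => ℝ) 2, x = 0 := by
      intro x
      have hx := (hinv1' x).symm
      rcases mul_eq_zero.1 hB0 with h | h
      · have hB : B = 0 := norm_eq_zero.1 h
        simpa [hB] using hx
      · have hBi : Binv = 0 := norm_eq_zero.1 h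
        simpa [hBi] using hx
    rw [htriv (u - uΛ)]
    simp only [map_zero, inner_zero_left, Real.sqrt_zero]
    positivity
  have hBn : 0 < ‖B‖ := by
    rcases (mul_ne_zero_iff.1 hB0) with ⟨h1, _⟩
    exact lt_of_le_of_ne (norm_nonneg _) (Ne.symm h1)
  have hBin : 0 < ‖Binv‖ := by
    rcases (mul_ne_zero_iff.1 hB0) with ⟨_, h2⟩
    exact lt_of_le_of_ne (norm_nonneg _) (Ne.symm h2)
  set r : lp (fun _ : J => ℝ) 2 := B w - f with hr
  set d : lp (fun _ : J => ℝ) 2 := restr (↑Λ) r with hd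
  have hd_in : ∀ i ∈ Λ, d i = r i := by
    intro i hi; rw [hd, restr_apply]; simp [hi]
  have hd_out : ∀ i : J, i ∉ Λ → d i = 0 := by
    intro i hi; rw [hd, restr_apply]; simp [hi]
  -- ⟪r, d⟫ = ⟪d, d⟫
  have hrd : ⟪r, d⟫ = ⟪d, d⟫ := by
    rw [lp.inner_eq_tsum, lp.inner_eq_tsum]
    refine tsum_congr fun i => ?_
    simp only [Real.inner_apply]
    by_cases hi : i ∈ Λ
    · rw [hd_in i hi]
    · rw [hd_out i hi]; ring
  -- orthogonality: if g vanishes on Λ and d' vanishes outside Λ, ⟪g, d'⟫ = 0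
  have hGal : ∀ g d' : lp (fun _ : J => ℝ) 2, (∀ i ∈ Λ, g i = 0) →
      (∀ i : J, i ∉ Λ → d' i = 0) → ⟪g, d'⟫ = 0 := by
    intro g d' hg hd'
    rw [lp.inner_eq_tsum]
    simp only [Real.inner_apply]
    have hz : ∀ i, g i * d' i = 0 := by
      intro i
      by_cases hi : i ∈ Λ
      · rw [hg i hi, zero_mul]
      · rw [hd' i hi, mul_zero]
    calc (∑' i, g i * d' i) = ∑' (_ : J), (0:ℝ) := tsum_congr hz
    _ = 0 := tsum_zero
  have hzero : ∀ i ∈ Λ, (B (u - uΛ)) i = 0 := by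
    intro i hi
    have : B (u - uΛ) = B u - B uΛ := map_sub B u uΛ
    rw [this, lp.coeFn_sub, Pi.sub_apply, hu, huΛ i hi, sub_self]
  have hcross : ⟪B (u - uΛ), uΛ - w⟫ = 0 := by
    refine hGal _ _ hzero ?_
    intro i hi
    rw [lp.coeFn_sub, Pi.sub_apply, huΛsupp i hi, hsupp i hi, sub_self]
  have hcross' : ⟪B (uΛ - w), u - uΛ⟫ = 0 := by
    rw [hsa, real_inner_comm]; exact hcross
  -- Pythagoras
  have hPyth : ⟪B (u - w), u - w⟫ = ⟪B (u - uΛ), u - uΛ⟫ + ⟪B (uΛ - w), uΛ - w⟫ := by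
    have hsplit : u - w = (u - uΛ) + (uΛ - w) := by abel
    rw [hsplit, map_add, inner_add_left, inner_add_right, inner_add_right, hcross, hcross']
    ring
  set E := ⟪B (u - w), u - w⟫ with hE
  set G := ⟪B (u - uΛ), u - uΛ⟫ with hG
  set P := ⟪B (uΛ - w), uΛ - w⟫ with hP
  have hEnn : 0 ≤ E := hpos _
  have hGnn : 0 ≤ G := hpos _
  have hPnn : 0 ≤ P := hpos _
  -- ⟪B(u-w), d⟫ = -⟪d,d⟫
  have hBuw : B (u - w) = -r := by
    rw [map_sub, hu, hr]; abel
  have hBud : ⟪B (u - w), d⟫ = -⟪d, d⟫ := by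
    rw [hBuw, inner_neg_left, hrd]
  have hGal_d : ⟪B (u - uΛ), d⟫ = 0 := hGal _ _ hzero hd_out
  have hPd : ⟪B (uΛ - w), d⟫ = -⟪d, d⟫ := by
    have : B (uΛ - w) = B (u - w) - B (u - uΛ) := by
      rw [← map_sub]; congr 1; abel
    rw [this, inner_sub_left, hBud, hGal_d]; ring
  -- Cauchy-Schwarz
  have hCS : ⟪B (uΛ - w), d⟫ ^ 2 ≤ P * ⟪B d, d⟫ := csB_aux B hsa hpos _ _
  have hdd : ⟪d, d⟫ = ‖d‖ ^ 2 := real_inner_self_eq_norm_sq d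
  have hBd : ⟪B d, d⟫ ≤ ‖B‖ * ‖d‖ ^ 2 := by
    calc ⟪B d, d⟫ ≤ ‖B d‖ * ‖d‖ := real_inner_le_norm _ _
    _ ≤ (‖B‖ * ‖d‖) * ‖d‖ := by
        exact mul_le_mul_of_nonneg_right (B.le_opNorm d) (norm_nonneg _)
    _ = ‖B‖ * ‖d‖ ^ 2 := by ring
  -- ‖d‖⁴ ≤ P * ‖B‖ * ‖d‖²
  have hkey : ‖d‖ ^ 2 * ‖d‖ ^ 2 ≤ P * (‖B‖ * ‖d‖ ^ 2) := by
    have := hCS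
    rw [hPd, hdd] at this
    calc ‖d‖ ^ 2 * ‖d‖ ^ 2 = (-(‖d‖ ^ 2)) ^ 2 := by ring
    _ ≤ P * ⟪B d, d⟫ := this
    _ ≤ P * (‖B‖ * ‖d‖ ^ 2) := mul_le_mul_of_nonneg_left hBd hPnn
  -- ω²‖r‖² ≤ ‖d‖²
  have hdoer2 : ω ^ 2 * ‖r‖ ^ 2 ≤ ‖d‖ ^ 2 := by
    have h1 : 0 ≤ ω * ‖r‖ := mul_nonneg hω0.le (norm_nonneg _)
    nlinarith [hdoerfler, norm_nonneg (restr (↑Λ) (B w - f))]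
  -- ‖d‖² ≤ ‖B‖ * P
  have hdP : ‖d‖ ^ 2 ≤ ‖B‖ * P := by
    rcases eq_or_lt_of_le (sq_nonneg ‖d‖) with h0 | h0
    · rw [← h0]; positivity
    · have := hkey
      nlinarith [this, h0]
  -- E ≤ ‖Binv‖ * ‖r‖²
  have hEr : E ≤ ‖Binv‖ * ‖r‖ ^ 2 := by
    have huw : u - w = -(Binv r) := by
      have := hinv1' (u - w)
      rw [hBuw] at this
      rw [← this, map_neg]
    calc E = ⟪-r, -(Binv r)⟫ := by rw [hE, hBuw, huw]
    _ = ⟪r, Binv r⟫ := by rw [inner_neg_left, inner_neg_right]; ring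
    _ ≤ ‖r‖ * ‖Binv r‖ := real_inner_le_norm _ _
    _ ≤ ‖r‖ * (‖Binv‖ * ‖r‖) := mul_le_mul_of_nonneg_left (Binv.le_opNorm r) (norm_nonneg _)
    _ = ‖Binv‖ * ‖r‖ ^ 2 := by ring
  -- combine: ω² E ≤ ‖B‖‖Binv‖ P
  have hmain : ω ^ 2 * E ≤ (‖B‖ * ‖Binv‖) * P := by
    have h1 : ω ^ 2 * E ≤ ω ^ 2 * (‖Binv‖ * ‖r‖ ^ 2) :=
      mul_le_mul_of_nonneg_left hEr (by positivity)
    have h2 : ω ^ 2 * ‖r‖ ^ 2 ≤ ‖B‖ * P := le_trans hdoer2 hdP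
    nlinarith [h1, h2, hBin]
  have hGle : G ≤ (1 - ω ^ 2 / (‖B‖ * ‖Binv‖)) * E := by
    have hκ : 0 < ‖B‖ * ‖Binv‖ := mul_pos hBn hBin
    have hPE : ω ^ 2 / (‖B‖ * ‖Binv‖) * E ≤ P := by
      rw [div_mul_eq_mul_div, div_le_iff₀ hκ]
      linarith [hmain]
    have : G = E - P := by rw [hG, hP, hE]; linarith [hPyth]
    rw [this]
    have : (1 - ω ^ 2 / (‖B‖ * ‖Binv‖)) * E = E - ω ^ 2 / (‖B‖ * ‖Binv‖) * E := by ring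
    rw [this]
    linarith [hPE]
  calc Real.sqrt G ≤ Real.sqrt ((1 - ω ^ 2 / (‖B‖ * ‖Binv‖)) * E) := Real.sqrt_le_sqrt hGle
  _ = Real.sqrt (1 - ω ^ 2 / (‖B‖ * ‖Binv‖)) * Real.sqrt E := Real.sqrt_mul' _ hEnn
end

section
/- Let η > 0 and let Λ ⊆ S be a finite tree such that ẽ(δ) ≤ η for every leaf δ ∈ L(Λ). Then Σ_{δ ∈ L(Λ)} e(δ) ≤ (#Λ)·η. -/
/-- A subset `T` of a forest (with parent map `parent`, roots = nodes with no parent)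
is a tree if it contains all roots and the parent of each of its non-root elements. -/
def IsTree {S : Type*} (parent : S → Option S) (T : Set S) : Prop :=
  (∀ δ : S, parent δ = none → δ ∈ T) ∧
    ∀ δ ∈ T, ∀ δ' : S, parent δ = some δ' → δ' ∈ T

namespace Stmt9Aux

open Classical

variable {S : Type*} (parent : S → Option S)

/-- `Anc parent γ δ` : γ is an ancestor of δ (or equal). -/
def Anc : S → S → Prop := Relation.ReflTransGen fun b a : S => parent a = some b

variable {parent}

lemma anc_refl (a : S) : Anc parent a a := Relation.ReflTransGen.refl

lemma mem_of_anc {Λ : Finset S} (hΛ : IsTree parent ↑Λ) {γ δ : S}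
    (h : Anc parent γ δ) : δ ∈ Λ → γ ∈ Λ := by
  induction h with
  | refl => exact id
  | tail _ step ih => exact fun hc => ih (hΛ.2 _ hc _ step)

lemma not_anc_child (hwf : WellFounded fun b a : S => parent a = some b)
    {γ c : S} (hc : parent c = some γ) (h : Anc parent c γ) : False := by
  have h2 : WellFounded (Relation.TransGen fun b a : S => parent a = some b) := hwf.transGen
  have h3 : IsIrrefl S (Relation.TransGen fun b a : S => parent a = some b) := h2.isIrrefl
  exact h3.irrefl γ (Relation.TransGen.head' hc h)

lemma anc_total (hwf : WellFounded fun b a : S => parent a = some b) (δ : S) :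
    ∀ a b : S, Anc parent a δ → Anc parent b δ → Anc parent a b ∨ Anc parent b a := by
  induction δ using WellFounded.induction hwf with
  | _ δ ih =>
    intro a b ha hb
    rcases ha.cases_tail with h | ⟨c, hac, hcδ⟩
    · subst h; exact Or.inr hb
    · rcases hb.cases_tail with h | ⟨d, hbd, hdδ⟩
      · subst h; exact Or.inl ha
      · have hdc : d = c := by
          rw [hcδ] at hdδ; exact (Option.some.inj hdδ).symm
        subst hdc
        exact ih d hdδ a b hac hbd

variable {e et : S → ℝ}

lemma e_step (hcfin : ∀ δ : S, {δ' : S | parent δ' = some δ}.Finite)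
    (he0 : ∀ δ : S, 0 ≤ e δ)
    (hsub : ∀ δ : S, ∑' δ' : {x : S // parent x = some δ}, e δ'.1 ≤ e δ)
    {γ δ : S} (h : parent δ = some γ) : e δ ≤ e γ := by
  refine le_trans ?_ (hsub γ)
  haveI : Finite {x : S // parent x = some γ} := (hcfin γ).to_subtype
  have hs : Summable (fun δ' : {x : S // parent x = some γ} => e δ'.1) := Summable.of_finite
  exact Summable.le_tsum hs ⟨δ, h⟩ fun b _ => he0 b.1

lemma e_mono (hcfin : ∀ δ : S, {δ' : S | parent δ' = some δ}.Finite)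
    (he0 : ∀ δ : S, 0 ≤ e δ)
    (hsub : ∀ δ : S, ∑' δ' : {x : S // parent x = some δ}, e δ'.1 ≤ e δ)
    {γ δ : S} (h : Anc parent γ δ) : e δ ≤ e γ := by
  induction h with
  | refl => exact le_rfl
  | tail _ step ih => exact le_trans (e_step hcfin he0 hsub step) ih

lemma et_pos (hwf : WellFounded fun b a : S => parent a = some b)
    (hcfin : ∀ δ : S, {δ' : S | parent δ' = some δ}.Finite)
    (he0 : ∀ δ : S, 0 ≤ e δ)
    (hsub : ∀ δ : S, ∑' δ' : {x : S // parent x = some δ}, e δ'.1 ≤ e δ)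
    (hetroot : ∀ δ : S, parent δ = none → et δ = e δ)
    (hetrec : ∀ δ δ' : S, parent δ = some δ' →
      et δ = if e δ + et δ' = 0 then 0 else e δ * et δ' / (e δ + et δ'))
    (δ : S) : 0 < e δ → 0 < et δ := by
  induction δ using WellFounded.induction hwf with
  | _ δ ih =>
    intro hpos
    cases hp : parent δ with
    | none => rw [hetroot δ hp]; exact hpos
    | some p =>
      have hep : 0 < e p := lt_of_lt_of_le hpos (e_step hcfin he0 hsub hp)
      have hetp : 0 < et p := ih p hp hep
      rw [hetrec δ p hp, if_neg (add_pos hpos hetp).ne']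
      exact div_pos (mul_pos hpos hetp) (add_pos hpos hetp)

lemma et_inv (hwf : WellFounded fun b a : S => parent a = some b)
    (hcfin : ∀ δ : S, {δ' : S | parent δ' = some δ}.Finite)
    (he0 : ∀ δ : S, 0 ≤ e δ)
    (hsub : ∀ δ : S, ∑' δ' : {x : S // parent x = some δ}, e δ'.1 ≤ e δ)
    (hetroot : ∀ δ : S, parent δ = none → et δ = e δ)
    (hetrec : ∀ δ δ' : S, parent δ = some δ' →
      et δ = if e δ + et δ' = 0 then 0 else e δ * et δ' / (e δ + et δ'))
    (Λ : Finset S) (hΛ : IsTree parent ↑Λ) (δ : S) :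
    δ ∈ Λ → 0 < e δ →
      (et δ)⁻¹ = ∑ γ ∈ Λ.filter (fun γ => Anc parent γ δ), (e γ)⁻¹ := by
  induction δ using WellFounded.induction hwf with
  | _ δ ih =>
    intro hδΛ hpos
    cases hp : parent δ with
    | none =>
      have hfe : Λ.filter (fun γ => Anc parent γ δ) = {δ} := by
        ext γ
        simp only [Finset.mem_filter, Finset.mem_singleton]
        constructor
        · rintro ⟨hγ, hanc⟩
          rcases hanc.cases_tail with h | ⟨c, _, hc⟩
          · exact h.symm
          · rw [hp] at hc; cases hc
        · rintro rfl; exact ⟨hδΛ, anc_refl _⟩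
      rw [hfe, Finset.sum_singleton, hetroot δ hp]
    | some p =>
      have hpΛ : p ∈ Λ := hΛ.2 δ hδΛ p hp
      have hep : 0 < e p := lt_of_lt_of_le hpos (e_step hcfin he0 hsub hp)
      have hetp : 0 < et p := et_pos hwf hcfin he0 hsub hetroot hetrec p hep
      have hrec := hetrec δ p hp
      rw [if_neg (add_pos hpos hetp).ne'] at hrec
      have hinv : (et δ)⁻¹ = (e δ)⁻¹ + (et p)⁻¹ := by
        rw [hrec]
        have h1 : e δ ≠ 0 := hpos.ne'
        have h2 : et p ≠ 0 := hetp.ne'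
        have h3 : e δ + et p ≠ 0 := (add_pos hpos hetp).ne'
        field_simp
        ring
      have hins : Λ.filter (fun γ => Anc parent γ δ)
          = insert δ (Λ.filter (fun γ => Anc parent γ p)) := by
        ext γ
        simp only [Finset.mem_filter, Finset.mem_insert]
        constructor
        · rintro ⟨hγ, hanc⟩
          rcases hanc.cases_tail with h | ⟨c, hgc, hc⟩
          · exact Or.inl h.symm
          · rw [hp] at hc
            obtain rfl : c = p := (Option.some.inj hc).symm
            exact Or.inr ⟨hγ, hgc⟩
        · rintro (rfl | ⟨hγ, hanc⟩)
          · exact ⟨hδΛ, anc_refl γ⟩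
          · exact ⟨hγ, hanc.tail hp⟩
      have hnotmem : δ ∉ Λ.filter (fun γ => Anc parent γ p) := by
        intro hmem
        exact not_anc_child hwf hp (Finset.mem_filter.mp hmem).2
      rw [hins, Finset.sum_insert hnotmem, hinv, ih p hp hpΛ hep]

lemma children_sum (hcfin : ∀ δ : S, {δ' : S | parent δ' = some δ}.Finite)
    (he0 : ∀ δ : S, 0 ≤ e δ)
    (hsub : ∀ δ : S, ∑' δ' : {x : S // parent x = some δ}, e δ'.1 ≤ e δ)
    (Λ : Finset S) (γ : S) :
    ∑ c ∈ Λ.filter (fun c => parent c = some γ), e c ≤ e γ := by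
  classical
  set F := (hcfin γ).toFinset with hF
  have hsubF : Λ.filter (fun c => parent c = some γ) ⊆ F := by
    intro c hc
    rw [hF, Set.Finite.mem_toFinset]
    exact (Finset.mem_filter.mp hc).2
  have h1 : ∑ c ∈ Λ.filter (fun c => parent c = some γ), e c ≤ ∑ c ∈ F, e c :=
    Finset.sum_le_sum_of_subset_of_nonneg hsubF (fun i _ _ => he0 i)
  refine le_trans h1 (le_trans (le_of_eq ?_) (hsub γ))
  have heq : ∀ x : S, x ∈ F ↔ parent x = some γ := by
    intro x; rw [hF, Set.Finite.mem_toFinset]; rfl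
  rw [← Finset.tsum_subtype F e]
  exact (Equiv.subtypeEquivRight heq).tsum_eq (fun x : {x : S // parent x = some γ} => e x.1)

lemma sum_leaves (hwf : WellFounded fun b a : S => parent a = some b)
    (hcfin : ∀ δ : S, {δ' : S | parent δ' = some δ}.Finite)
    (he0 : ∀ δ : S, 0 ≤ e δ)
    (hsub : ∀ δ : S, ∑' δ' : {x : S // parent x = some δ}, e δ'.1 ≤ e δ)
    (Λ : Finset S) (hΛ : IsTree parent ↑Λ) :
    ∀ n : ℕ, ∀ γ ∈ Λ, (Λ.filter (fun x => Anc parent γ x)).card ≤ n →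
      ∑ δ ∈ (Λ.filter (fun δ => ∀ δ' : S, parent δ' = some δ → δ' ∉ Λ)).filter
          (fun δ => Anc parent γ δ), e δ ≤ e γ := by
  classical
  intro n
  induction n with
  | zero =>
    intro γ hγ hcard
    exfalso
    have hmem : γ ∈ Λ.filter (fun x => Anc parent γ x) :=
      Finset.mem_filter.mpr ⟨hγ, anc_refl γ⟩
    have := Finset.card_pos.mpr ⟨γ, hmem⟩
    omega
  | succ n ih =>
    intro γ hγ hcard
    by_cases hleafγ : ∀ δ' : S, parent δ' = some γ → δ' ∉ Λ
    · have hsingle : (Λ.filter (fun δ => ∀ δ' : S, parent δ' = some δ → δ' ∉ Λ)).filter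
          (fun δ => Anc parent γ δ) = {γ} := by
        ext δ
        simp only [Finset.mem_filter, Finset.mem_singleton]
        constructor
        · rintro ⟨⟨hδΛ, _⟩, hanc⟩
          rcases hanc.cases_head with h | ⟨c, hc, hcd⟩
          · exact h.symm
          · exact absurd (mem_of_anc hΛ hcd hδΛ) (hleafγ c hc)
        · rintro rfl; exact ⟨⟨hγ, hleafγ⟩, anc_refl _⟩
      rw [hsingle, Finset.sum_singleton]
    · push_neg at hleafγ
      obtain ⟨c₀, hc₀p, hc₀Λ⟩ := hleafγ
      set C := Λ.filter (fun c => parent c = some γ) with hC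
      have hbi : (Λ.filter (fun δ => ∀ δ' : S, parent δ' = some δ → δ' ∉ Λ)).filter
            (fun δ => Anc parent γ δ)
          = C.biUnion (fun c =>
              (Λ.filter (fun δ => ∀ δ' : S, parent δ' = some δ → δ' ∉ Λ)).filter
                (fun δ => Anc parent c δ)) := by
        ext δ
        simp only [Finset.mem_biUnion, Finset.mem_filter, hC]
        constructor
        · rintro ⟨⟨hδΛ, hδleaf⟩, hanc⟩
          rcases hanc.cases_head with h | ⟨c, hc, hcd⟩
          · subst h
            exact absurd hc₀Λ (hδleaf c₀ hc₀p)
          · exact ⟨c, ⟨mem_of_anc hΛ hcd hδΛ, hc⟩, ⟨hδΛ, hδleaf⟩, hcd⟩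
        · rintro ⟨c, ⟨_, hcγ⟩, ⟨hδΛ, hδleaf⟩, hanc⟩
          exact ⟨⟨hδΛ, hδleaf⟩, Relation.ReflTransGen.head hcγ hanc⟩
      have hdisj : (↑C : Set S).PairwiseDisjoint (fun c =>
          (Λ.filter (fun δ => ∀ δ' : S, parent δ' = some δ → δ' ∉ Λ)).filter
            (fun δ => Anc parent c δ)) := by
        intro c₁ h₁ c₂ h₂ hne
        rw [Finset.mem_coe, hC, Finset.mem_filter] at h₁ h₂
        rw [Function.onFun, Finset.disjoint_left]
        intro δ hδ₁ hδ₂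
        have a₁ : Anc parent c₁ δ := (Finset.mem_filter.mp hδ₁).2
        have a₂ : Anc parent c₂ δ := (Finset.mem_filter.mp hδ₂).2
        have hkey : ∀ x y : S, parent x = some γ → parent y = some γ → x ≠ y →
            Anc parent x y → False := by
          intro x y hx hy hxy hanc
          rcases hanc.cases_tail with h | ⟨d, hxd, hd⟩
          · exact hxy h.symm
          · rw [hy] at hd
            obtain rfl : d = γ := (Option.some.inj hd).symm
            exact not_anc_child hwf hx hxd
        rcases anc_total hwf δ c₁ c₂ a₁ a₂ with h | h
        · exact hkey c₁ c₂ h₁.2 h₂.2 hne h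
        · exact hkey c₂ c₁ h₂.2 h₁.2 hne.symm h
      rw [hbi, Finset.sum_biUnion hdisj]
      have step1 : ∀ c ∈ C,
          ∑ δ ∈ (Λ.filter (fun δ => ∀ δ' : S, parent δ' = some δ → δ' ∉ Λ)).filter
            (fun δ => Anc parent c δ), e δ ≤ e c := by
        intro c hc
        obtain ⟨hcΛ, hcp⟩ := Finset.mem_filter.mp hc
        apply ih c hcΛ
        have hsub1 : Λ.filter (fun x => Anc parent c x) ⊆ Λ.filter (fun x => Anc parent γ x) := by
          intro x hx
          obtain ⟨h1, h2⟩ := Finset.mem_filter.mp hx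
          exact Finset.mem_filter.mpr ⟨h1, Relation.ReflTransGen.head hcp h2⟩
        have hγin : γ ∈ Λ.filter (fun x => Anc parent γ x) :=
          Finset.mem_filter.mpr ⟨hγ, anc_refl γ⟩
        have hγout : γ ∉ Λ.filter (fun x => Anc parent c x) := by
          intro h
          exact not_anc_child hwf hcp (Finset.mem_filter.mp h).2
        have hlt : (Λ.filter (fun x => Anc parent c x)).card
            < (Λ.filter (fun x => Anc parent γ x)).card :=
          Finset.card_lt_card ((Finset.ssubset_iff_of_subset hsub1).mpr ⟨γ, hγin, hγout⟩)
        omega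
      calc ∑ c ∈ C, ∑ δ ∈ (Λ.filter (fun δ => ∀ δ' : S, parent δ' = some δ → δ' ∉ Λ)).filter
              (fun δ => Anc parent c δ), e δ
          ≤ ∑ c ∈ C, e c := Finset.sum_le_sum step1
        _ ≤ e γ := children_sum hcfin he0 hsub Λ γ

end Stmt9Aux

open Stmt9Aux in
open Classical in
/-- Lemma A.1 (tree upper bound): if `ẽ(δ) ≤ η` for every leaf `δ` of a finite tree
`Λ`, then `Σ_{δ∈L(Λ)} e(δ) ≤ (#Λ)·η`. -/
theorem stmt_9 {S : Type*} [Countable S] (parent : S → Option S)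
    (hwf : WellFounded fun b a : S => parent a = some b)
    (hrfin : {δ : S | parent δ = none}.Finite)
    (hrne : {δ : S | parent δ = none}.Nonempty)
    (hcfin : ∀ δ : S, {δ' : S | parent δ' = some δ}.Finite)
    (e et : S → ℝ) (he0 : ∀ δ : S, 0 ≤ e δ) (het0 : ∀ δ : S, 0 ≤ et δ)
    (hsub : ∀ δ : S, ∑' δ' : {x : S // parent x = some δ}, e δ'.1 ≤ e δ)
    (hetroot : ∀ δ : S, parent δ = none → et δ = e δ)
    (hetrec : ∀ δ δ' : S, parent δ = some δ' →
      et δ = if e δ + et δ' = 0 then 0 else e δ * et δ' / (e δ + et δ'))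
    (η : ℝ) (hη : 0 < η)
    (Λ : Finset S) (hΛ : IsTree parent ↑Λ)
    (hleaf : ∀ δ ∈ Λ.filter fun δ => ∀ δ' : S, parent δ' = some δ → δ' ∉ Λ,
      et δ ≤ η) :
    ∑ δ ∈ Λ.filter (fun δ => ∀ δ' : S, parent δ' = some δ → δ' ∉ Λ), e δ ≤
      Λ.card * η := by
  classical
  set L := Λ.filter (fun δ => ∀ δ' : S, parent δ' = some δ → δ' ∉ Λ) with hL
  have key : ∀ δ ∈ L, e δ ≤ η * ∑ γ ∈ Λ.filter (fun γ => Anc parent γ δ), e δ / e γ := by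
    intro δ hδ
    obtain ⟨hδΛ, _⟩ := Finset.mem_filter.mp hδ
    have hsumnn : (0:ℝ) ≤ ∑ γ ∈ Λ.filter (fun γ => Anc parent γ δ), e δ / e γ :=
      Finset.sum_nonneg fun γ _ => div_nonneg (he0 δ) (he0 γ)
    rcases eq_or_lt_of_le (he0 δ) with h0 | hpos
    · have hnn : (0:ℝ) ≤ η * ∑ γ ∈ Λ.filter (fun γ => Anc parent γ δ), e δ / e γ :=
        mul_nonneg hη.le hsumnn
      linarith
    · have hetδ : 0 < et δ := et_pos hwf hcfin he0 hsub hetroot hetrec δ hpos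
      have hinv := et_inv hwf hcfin he0 hsub hetroot hetrec Λ hΛ δ hδΛ hpos
      have hetη : et δ ≤ η := hleaf δ hδ
      have he : e δ = et δ * ∑ γ ∈ Λ.filter (fun γ => Anc parent γ δ), e δ / e γ := by
        have hsum : ∑ γ ∈ Λ.filter (fun γ => Anc parent γ δ), e δ / e γ
            = e δ * ∑ γ ∈ Λ.filter (fun γ => Anc parent γ δ), (e γ)⁻¹ := by
          rw [Finset.mul_sum]
          exact Finset.sum_congr rfl fun γ _ => div_eq_mul_inv (e δ) (e γ)
        rw [hsum, ← hinv]
        have h1 : et δ ≠ 0 := hetδ.ne'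
        field_simp
      calc e δ = et δ * ∑ γ ∈ Λ.filter (fun γ => Anc parent γ δ), e δ / e γ := he
        _ ≤ η * ∑ γ ∈ Λ.filter (fun γ => Anc parent γ δ), e δ / e γ :=
            mul_le_mul_of_nonneg_right hetη hsumnn
  have sum1 : ∑ δ ∈ L, e δ
      ≤ η * ∑ δ ∈ L, ∑ γ ∈ Λ.filter (fun γ => Anc parent γ δ), e δ / e γ := by
    rw [Finset.mul_sum]
    exact Finset.sum_le_sum key
  have swap : ∑ δ ∈ L, ∑ γ ∈ Λ.filter (fun γ => Anc parent γ δ), e δ / e γ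
      = ∑ γ ∈ Λ, ∑ δ ∈ L.filter (fun δ => Anc parent γ δ), e δ / e γ := by
    calc ∑ δ ∈ L, ∑ γ ∈ Λ.filter (fun γ => Anc parent γ δ), e δ / e γ
        = ∑ δ ∈ L, ∑ γ ∈ Λ, if Anc parent γ δ then e δ / e γ else 0 :=
          Finset.sum_congr rfl fun δ _ => Finset.sum_filter _ _
      _ = ∑ γ ∈ Λ, ∑ δ ∈ L, if Anc parent γ δ then e δ / e γ else 0 := Finset.sum_comm
      _ = ∑ γ ∈ Λ, ∑ δ ∈ L.filter (fun δ => Anc parent γ δ), e δ / e γ :=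
          Finset.sum_congr rfl fun γ _ => (Finset.sum_filter _ _).symm
  have bound : ∀ γ ∈ Λ, ∑ δ ∈ L.filter (fun δ => Anc parent γ δ), e δ / e γ ≤ 1 := by
    intro γ hγ
    rcases eq_or_lt_of_le (he0 γ) with h0 | hpos
    · have hz : ∀ δ ∈ L.filter (fun δ => Anc parent γ δ), e δ / e γ = 0 := by
        intro δ hδ
        obtain ⟨_, hanc⟩ := Finset.mem_filter.mp hδ
        have h1 : e δ ≤ e γ := e_mono hcfin he0 hsub hanc
        have h2 : e δ = 0 := le_antisymm (h0 ▸ h1) (he0 δ)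
        rw [h2, zero_div]
      rw [Finset.sum_eq_zero hz]
      norm_num
    · rw [← Finset.sum_div, div_le_one hpos]
      exact sum_leaves hwf hcfin he0 hsub Λ hΛ
        (Λ.filter (fun x => Anc parent γ x)).card γ hγ le_rfl
  calc ∑ δ ∈ L, e δ
      ≤ η * ∑ δ ∈ L, ∑ γ ∈ Λ.filter (fun γ => Anc parent γ δ), e δ / e γ := sum1
    _ = η * ∑ γ ∈ Λ, ∑ δ ∈ L.filter (fun δ => Anc parent γ δ), e δ / e γ := by rw [swap]
    _ ≤ η * ∑ γ ∈ Λ, (1:ℝ) :=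
        mul_le_mul_of_nonneg_left (Finset.sum_le_sum bound) hη.le
    _ = Λ.card * η := by
        rw [Finset.sum_const, nsmul_eq_mul, mul_one, mul_comm]
end

section
/- Let η > 0, let δ₀ ∈ S, and let Λ_{δ₀} be a finite subtree rooted at δ₀, i.e., a finite subset of S containing δ₀ such that every element of Λ_{δ₀} is a descendant of or equal to δ₀ and the parent of every element of Λ_{δ₀} other than δ₀ again lies in Λ_{δ₀}. If ẽ(δ) ≥ η for all δ ∈ Λ_{δ₀}, then e(δ₀) ≥ (#Λ_{δ₀})·η. -/
open Classical in
/-- Lemma A.2 (tree lower bound): if `Λ_{δ₀}` is a finite subtree rooted at `δ₀`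
(every element is a descendant of or equal to `δ₀`, and the parent of every element
other than `δ₀` again lies in `Λ_{δ₀}`) and `ẽ(δ) ≥ η` for all `δ ∈ Λ_{δ₀}`, then
`e(δ₀) ≥ (#Λ_{δ₀})·η`. -/
theorem stmt_10 {S : Type*} [Countable S] (parent : S → Option S)
    (hwf : WellFounded fun b a : S => parent a = some b)
    (hrfin : {δ : S | parent δ = none}.Finite)
    (hrne : {δ : S | parent δ = none}.Nonempty)
    (hcfin : ∀ δ : S, {δ' : S | parent δ' = some δ}.Finite)
    (e et : S → ℝ) (he0 : ∀ δ : S, 0 ≤ e δ) (het0 : ∀ δ : S, 0 ≤ et δ)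
    (hsub : ∀ δ : S, ∑' δ' : {x : S // parent x = some δ}, e δ'.1 ≤ e δ)
    (hetroot : ∀ δ : S, parent δ = none → et δ = e δ)
    (hetrec : ∀ δ δ' : S, parent δ = some δ' →
      et δ = if e δ + et δ' = 0 then 0 else e δ * et δ' / (e δ + et δ'))
    (η : ℝ) (hη : 0 < η)
    (δ₀ : S) (Λ₀ : Finset S) (hmem : δ₀ ∈ Λ₀)
    (hdesc : ∀ δ ∈ Λ₀,
      Relation.ReflTransGen (fun a b : S => parent a = some b) δ δ₀)
    (hclosed : ∀ δ ∈ Λ₀, δ ≠ δ₀ → ∀ q : S, parent δ = some q → q ∈ Λ₀)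
    (hge : ∀ δ ∈ Λ₀, η ≤ et δ) :
    (Λ₀.card : ℝ) * η ≤ e δ₀ := by
  classical
  set step : S → S → Prop := (fun a b : S => parent a = some b) with hstepdef
  have hru : Relator.RightUnique step := by
    intro a b c hab hac
    rw [hstepdef] at hab hac
    rw [hab] at hac
    exact Option.some.inj hac
  have hirr : ∀ a : S, ¬ Relation.TransGen step a a := by
    intro a ha
    exact (hwf.transGen.isIrrefl).irrefl a (Relation.transGen_swap.mp ha)
  -- et ≤ e everywhere
  have hetle : ∀ δ : S, et δ ≤ e δ := by
    intro δ
    cases hp : parent δ with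
    | none => rw [hetroot δ hp]
    | some p =>
      rw [hetrec δ p hp]
      split
      · exact he0 δ
      · rename_i hne
        have h1 : 0 ≤ e δ + et p := add_nonneg (he0 δ) (het0 p)
        have h2 : 0 < e δ + et p := lt_of_le_of_ne h1 (Ne.symm hne)
        rw [div_le_iff₀ h2]
        nlinarith [he0 δ, het0 p]
  -- finite sums of children errors are bounded by the parent error
  have hsumch : ∀ δ : S, ∀ F : Finset S, (∀ c ∈ F, parent c = some δ) →
      ∑ c ∈ F, e c ≤ e δ := by
    intro δ F hF
    haveI : Fintype {x : S // parent x = some δ} := (hcfin δ).fintype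
    set F' : Finset {x : S // parent x = some δ} :=
      F.attach.map ⟨fun x => ⟨x.1, hF x.1 x.2⟩, by
        intro a b hab
        rw [Subtype.ext_iff]
        have h := congrArg Subtype.val hab
        exact h⟩ with hF'
    have h2 : ∑ c ∈ F, e c = ∑ y ∈ F', e y.1 := by
      rw [hF', Finset.sum_map]
      exact (Finset.sum_attach F e).symm
    have h3 : ∑ y ∈ F', e y.1 ≤ ∑ y : {x : S // parent x = some δ}, e y.1 := by
      apply Finset.sum_le_sum_of_subset_of_nonneg (Finset.subset_univ _)
      intro i _ _; exact he0 i.1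
    calc ∑ c ∈ F, e c = ∑ y ∈ F', e y.1 := h2
      _ ≤ ∑ y : {x : S // parent x = some δ}, e y.1 := h3
      _ = ∑' δ' : {x : S // parent x = some δ}, e δ'.1 := (tsum_fintype _).symm
      _ ≤ e δ := hsub δ
  -- subtree of δ inside Λ₀
  set Sub : S → Finset S :=
    (fun δ => Λ₀.filter (fun x => Relation.ReflTransGen step x δ)) with hSubdef
  have hSubmem : ∀ δ x : S, x ∈ Sub δ ↔ x ∈ Λ₀ ∧ Relation.ReflTransGen step x δ := by
    intro δ x
    rw [hSubdef]
    simp [Finset.mem_filter]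
  -- closure: points between a member and δ₀ are members
  have hclosed' : ∀ x ∈ Λ₀, ∀ y : S, Relation.ReflTransGen step x y →
      Relation.ReflTransGen step y δ₀ → y ∈ Λ₀ := by
    intro x hx y hxy hyδ₀
    revert hx
    induction hxy using Relation.ReflTransGen.head_induction_on with
    | refl => intro hx; exact hx
    | head h' h ih =>
      rename_i a c
      intro ha
      apply ih
      have hane : a ≠ δ₀ := by
        intro heq
        apply hirr a
        subst heq
        exact Relation.TransGen.head' h' (Relation.ReflTransGen.trans h hyδ₀)
      exact hclosed a ha hane c (by rw [hstepdef] at h'; exact h')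
  -- children of δ inside Λ₀
  set Ch : S → Finset S :=
    (fun δ => Λ₀.filter (fun c => parent c = some δ)) with hChdef
  have hChmem : ∀ δ c : S, c ∈ Ch δ ↔ c ∈ Λ₀ ∧ parent c = some δ := by
    intro δ c; rw [hChdef]; simp [Finset.mem_filter]
  -- decomposition of the subtree
  have hdecomp : ∀ δ ∈ Λ₀, Sub δ = insert δ ((Ch δ).biUnion Sub) := by
    intro δ hδ
    ext x
    simp only [Finset.mem_insert, Finset.mem_biUnion]
    constructor
    · intro hx
      rw [hSubmem] at hx
      obtain ⟨hxΛ, hxδ⟩ := hx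
      rcases Relation.reflTransGen_iff_eq_or_transGen.mp hxδ with heq | htg
      · exact Or.inl heq.symm
      · right
        obtain ⟨c, hxc, hcδ⟩ := Relation.TransGen.tail'_iff.mp htg
        refine ⟨c, ?_, ?_⟩
        · rw [hChmem]
          refine ⟨?_, by rw [hstepdef] at hcδ; exact hcδ⟩
          exact hclosed' x hxΛ c hxc
            (Relation.ReflTransGen.head hcδ (hdesc δ hδ))
        · rw [hSubmem]; exact ⟨hxΛ, hxc⟩
    · intro hx
      rcases hx with heq | ⟨c, hc, hxc⟩
      · subst heq
        rw [hSubmem]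
        exact ⟨hδ, Relation.ReflTransGen.refl⟩
      · rw [hChmem] at hc
        rw [hSubmem] at hxc ⊢
        exact ⟨hxc.1, Relation.ReflTransGen.tail hxc.2 hc.2⟩
  have hnotmem : ∀ δ : S, δ ∉ (Ch δ).biUnion Sub := by
    intro δ hδ
    rw [Finset.mem_biUnion] at hδ
    obtain ⟨c, hc, hδc⟩ := hδ
    rw [hChmem] at hc
    rw [hSubmem] at hδc
    exact hirr δ (Relation.TransGen.tail' hδc.2 hc.2)
  have hdisj : ∀ δ : S, ∀ c₁ ∈ Ch δ, ∀ c₂ ∈ Ch δ, c₁ ≠ c₂ →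
      Disjoint (Sub c₁) (Sub c₂) := by
    have haux : ∀ δ c₁ c₂ : S, step c₁ δ → step c₂ δ → c₁ ≠ c₂ →
        Relation.ReflTransGen step c₁ c₂ → False := by
      intro δ c₁ c₂ h1 h2 hne h12
      rcases Relation.reflTransGen_iff_eq_or_transGen.mp h12 with heq | htg
      · exact hne heq.symm
      · obtain ⟨z, hz1, hz2⟩ := (Relation.TransGen.head'_iff).mp htg
        have : z = δ := hru hz1 h1
        subst this
        exact hirr z (Relation.TransGen.tail' hz2 h2)
    intro δ c₁ hc₁ c₂ hc₂ hne
    rw [Finset.disjoint_left]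
    intro x hx1 hx2
    rw [hSubmem] at hx1 hx2
    rw [hChmem] at hc₁ hc₂
    rcases Relation.ReflTransGen.total_of_right_unique hru hx1.2 hx2.2 with h | h
    · exact haux δ c₁ c₂ hc₁.2 hc₂.2 hne h
    · exact haux δ c₂ c₁ hc₂.2 hc₁.2 hne.symm h
  have hcard : ∀ δ ∈ Λ₀, (Sub δ).card = 1 + ∑ c ∈ Ch δ, (Sub c).card := by
    intro δ hδ
    rw [hdecomp δ hδ, Finset.card_insert_of_notMem (hnotmem δ),
      Finset.card_biUnion (hdisj δ)]
    omega
  -- positivity facts on Λ₀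
  have hpos : ∀ δ ∈ Λ₀, 0 < et δ := fun δ hδ => lt_of_lt_of_le hη (hge δ hδ)
  have hepos : ∀ δ ∈ Λ₀, 0 < e δ := fun δ hδ => lt_of_lt_of_le (hpos δ hδ) (hetle δ)
  -- key inequality by strong induction on the size of the subtree
  have key : ∀ n : ℕ, ∀ δ ∈ Λ₀, (Sub δ).card = n →
      ((Sub δ).card : ℝ) ≤ e δ / η - e δ / et δ + 1 := by
    intro n
    induction n using Nat.strong_induction_on with
    | _ n IH =>
      intro δ hδ hn
      -- each child's subtree is strictly smaller
      have hsubsub : ∀ c ∈ Ch δ, Sub c ⊆ Sub δ := by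
        intro c hc x hx
        rw [hChmem] at hc
        rw [hSubmem] at hx ⊢
        exact ⟨hx.1, Relation.ReflTransGen.tail hx.2 hc.2⟩
      have hlt : ∀ c ∈ Ch δ, (Sub c).card < (Sub δ).card := by
        intro c hc
        apply Finset.card_lt_card
        rw [Finset.ssubset_iff_of_subset (hsubsub c hc)]
        refine ⟨δ, ?_, ?_⟩
        · rw [hSubmem]; exact ⟨hδ, Relation.ReflTransGen.refl⟩
        · intro hmem'
          rw [hSubmem] at hmem'
          rw [hChmem] at hc
          exact hirr δ (Relation.TransGen.tail' hmem'.2 hc.2)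
      have hb0 : 0 < et δ := hpos δ hδ
      have hbη : η ≤ et δ := hge δ hδ
      -- per-child bound
      have hchild : ∀ c ∈ Ch δ, ((Sub c).card : ℝ) ≤ e c / η - e c / et δ := by
        intro c hc
        have hcΛ : c ∈ Λ₀ := ((hChmem δ c).mp hc).1
        have hcp : parent c = some δ := ((hChmem δ c).mp hc).2
        have hIH := IH (Sub c).card (hn ▸ hlt c hc) c hcΛ rfl
        have hc0 : 0 < e c := hepos c hcΛ
        have hetc : et c = e c * et δ / (e c + et δ) := by
          have h := hetrec c δ hcp
          rw [if_neg (by positivity)] at h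
          exact h
        have hden : (0:ℝ) < e c + et δ := by positivity
        have hratio : e c / et c = e c / et δ + 1 := by
          rw [hetc]
          field_simp
        rw [hratio] at hIH
        linarith
      -- sum over children
      have hsum1 : ∑ c ∈ Ch δ, ((Sub c).card : ℝ) ≤ ∑ c ∈ Ch δ, (e c / η - e c / et δ) :=
        Finset.sum_le_sum hchild
      have hsum2 : ∑ c ∈ Ch δ, (e c / η - e c / et δ)
          = (∑ c ∈ Ch δ, e c) * (1 / η - 1 / et δ) := by
        rw [Finset.sum_mul]
        apply Finset.sum_congr rfl
        intro c _
        field_simp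
      have hfac : 0 ≤ 1 / η - 1 / et δ := by
        have := one_div_le_one_div_of_le hη hbη
        linarith
      have hsum3 : (∑ c ∈ Ch δ, e c) * (1 / η - 1 / et δ)
          ≤ e δ * (1 / η - 1 / et δ) := by
        apply mul_le_mul_of_nonneg_right _ hfac
        exact hsumch δ (Ch δ) (fun c hc => ((hChmem δ c).mp hc).2)
      have hcards : ((Sub δ).card : ℝ) = 1 + ∑ c ∈ Ch δ, ((Sub c).card : ℝ) := by
        rw [hcard δ hδ]
        push_cast
        ring
      have he0' : 0 < e δ := hepos δ hδ
      have heq : e δ * (1 / η - 1 / et δ) = e δ / η - e δ / et δ := by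
        field_simp
      linarith [hsum1, hsum2, hsum3, hcards, heq]
  -- conclude
  have hΛSub : Sub δ₀ = Λ₀ := by
    ext x
    rw [hSubmem]
    constructor
    · exact fun h => h.1
    · intro hx
      exact ⟨hx, hdesc x hx⟩
  have hkey := key (Sub δ₀).card δ₀ hmem rfl
  rw [hΛSub] at hkey
  have h1 : (1:ℝ) ≤ e δ₀ / et δ₀ := by
    rw [le_div_iff₀ (hpos δ₀ hmem)]
    simpa using hetle δ₀
  have h2 : (Λ₀.card : ℝ) ≤ e δ₀ / η := by linarith
  calc (Λ₀.card : ℝ) * η ≤ (e δ₀ / η) * η := by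
        apply mul_le_mul_of_nonneg_right h2 (le_of_lt hη)
    _ = e δ₀ := by field_simp
end

section
/- Cardinality bound for inexact bulk chasing: Let ζ ∈ [0, 1/2), ω₁ ∈ (0,1), and β ∈ (0, ‖B‖^{−1/2}) be such that ω̂ := (ω₁(1−ζ)+ζ)/(1−2ζ) ≤ κ(B)^{−1/2}(1 − ‖B‖β²)^{1/2}. Let w ∈ H, let Λ₀ ⊆ 𝒥 be finite with supp w ⊆ Λ₀, and let r ∈ H satisfy ‖r − (B w − f)‖ ≤ ζ‖B w − f‖. Then for every finite set Λ̄ ⊆ 𝒥 for which there exists v ∈ H with supp v ⊆ Λ̄ and ‖u − v‖ ≤ β‖u − w‖_B, the set Λ̂ := Λ₀ ∪ Λ̄ satisfies ‖r|_{Λ̂}‖ ≥ ω₁‖r‖ and #(Λ̂ \ Λ₀) ≤ #Λ̄. -/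
open scoped RealInnerProductSpace

section myaux

variable {J : Type*}

open Classical in
lemma my_restr_apply (Λ : Set J) (v : lp (fun _ : J => ℝ) 2) (i : J) :
    restr Λ v i = if i ∈ Λ then v i else 0 := rfl

open Classical in
lemma my_inner_restr (Λ : Set J) (q z : lp (fun _ : J => ℝ) 2)
    (hz : ∀ i ∉ Λ, z i = 0) : ⟪q, z⟫ = ⟪restr Λ q, z⟫ := by
  rw [lp.inner_eq_tsum, lp.inner_eq_tsum]
  refine tsum_congr fun i => ?_
  by_cases h : i ∈ Λ
  · simp [my_restr_apply, h]
  · simp [my_restr_apply, h, hz i h]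

open Classical in
lemma my_restr_add (Λ : Set J) (x y : lp (fun _ : J => ℝ) 2) :
    restr Λ (x + y) = restr Λ x + restr Λ y := by
  apply lp.ext
  funext i
  have h1 : (x + y) i = x i + y i := by rw [lp.coeFn_add]; rfl
  have h2 : (restr Λ x + restr Λ y) i = restr Λ x i + restr Λ y i := by
    rw [lp.coeFn_add]; rfl
  rw [h2, my_restr_apply, my_restr_apply, my_restr_apply, h1]
  by_cases h : i ∈ Λ <;> simp [h]

lemma my_norm_restr_le (Λ : Set J) (x : lp (fun _ : J => ℝ) 2) :
    ‖restr Λ x‖ ≤ ‖x‖ := by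
  have h1 : ⟪x, restr Λ x⟫ = ⟪restr Λ x, restr Λ x⟫ :=
    my_inner_restr Λ x (restr Λ x) (fun i hi => by simp [my_restr_apply, hi])
  have h2 : ‖restr Λ x‖ ^ 2 = ⟪x, restr Λ x⟫ := by
    rw [h1, real_inner_self_eq_norm_sq]
  nlinarith [real_inner_le_norm x (restr Λ x), norm_nonneg (restr Λ x),
    norm_nonneg x]

lemma my_form_cs (B : lp (fun _ : J => ℝ) 2 →L[ℝ] lp (fun _ : J => ℝ) 2)
    (hsa : ∀ x y, ⟪B x, y⟫ = ⟪x, B y⟫)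
    (hpos : ∀ v, 0 ≤ ⟪B v, v⟫) (x y : lp (fun _ : J => ℝ) 2) :
    ⟪B x, y⟫ ^ 2 ≤ ⟪B x, x⟫ * ⟪B y, y⟫ := by
  have key : ∀ t : ℝ, 0 ≤ ⟪B y, y⟫ * (t * t) + (2 * ⟪B x, y⟫) * t + ⟪B x, x⟫ := by
    intro t
    have h := hpos (x + t • y)
    have hyx : ⟪B y, x⟫ = ⟪B x, y⟫ := by
      rw [hsa y x, real_inner_comm]
    rw [map_add, map_smul] at h
    simp only [inner_add_left, inner_add_right, inner_smul_left, inner_smul_right,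
      RCLike.conj_to_real, hyx] at h
    nlinarith [h]
  have hd := discrim_le_zero key
  rw [discrim] at hd
  nlinarith [hd]

lemma my_normBx_sq_le (B : lp (fun _ : J => ℝ) 2 →L[ℝ] lp (fun _ : J => ℝ) 2)
    (hcs : ∀ x y : lp (fun _ : J => ℝ) 2, ⟪B x, y⟫ ^ 2 ≤ ⟪B x, x⟫ * ⟪B y, y⟫)
    (hpos : ∀ v, 0 ≤ ⟪B v, v⟫) (x : lp (fun _ : J => ℝ) 2) :
    ‖B x‖ ^ 2 ≤ ‖B‖ * ⟪B x, x⟫ := by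
  have h1 := hcs x (B x)
  have h2 : ⟪B (B x), B x⟫ ≤ ‖B‖ * ‖B x‖ ^ 2 := by
    have := real_inner_le_norm (B (B x)) (B x)
    have hop := B.le_opNorm (B x)
    nlinarith [norm_nonneg (B x)]
  have h3 : ⟪B x, B x⟫ = ‖B x‖ ^ 2 := real_inner_self_eq_norm_sq _
  rw [h3] at h1
  by_cases hz : ‖B x‖ = 0
  · have h4 : ‖B x‖ ^ 2 = 0 := by rw [hz]; ring
    rw [h4]; exact mul_nonneg (norm_nonneg _) (hpos x)
  · have hz' : 0 < ‖B x‖ := lt_of_le_of_ne (norm_nonneg _) (Ne.symm hz)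
    have h4 : ‖B x‖ ^ 2 * ‖B x‖ ^ 2 ≤ (‖B‖ * ⟪B x, x⟫) * ‖B x‖ ^ 2 := by
      nlinarith [mul_le_mul_of_nonneg_left h2 (hpos x)]
    exact le_of_mul_le_mul_right h4 (pow_pos hz' 2)

lemma my_norm_sq_le_Binv (B Binv : lp (fun _ : J => ℝ) 2 →L[ℝ] lp (fun _ : J => ℝ) 2)
    (hcs : ∀ x y : lp (fun _ : J => ℝ) 2, ⟪B x, y⟫ ^ 2 ≤ ⟪B x, x⟫ * ⟪B y, y⟫)
    (hpos : ∀ v, 0 ≤ ⟪B v, v⟫)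
    (hinv2 : B.comp Binv = ContinuousLinearMap.id ℝ _)
    (x : lp (fun _ : J => ℝ) 2) :
    ‖x‖ ^ 2 ≤ ‖Binv‖ * ⟪B x, x⟫ := by
  have hBiB : B (Binv x) = x := by
    have := ContinuousLinearMap.ext_iff.mp hinv2 x
    simpa using this
  have h1 := hcs (Binv x) x
  rw [hBiB] at h1
  have h2 : ⟪x, x⟫ = ‖x‖ ^ 2 := real_inner_self_eq_norm_sq _
  rw [h2] at h1
  have h3 : ⟪x, Binv x⟫ ≤ ‖Binv‖ * ‖x‖ ^ 2 := by
    have := real_inner_le_norm x (Binv x)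
    have hop := Binv.le_opNorm x
    nlinarith [norm_nonneg x]
  by_cases hz : ‖x‖ = 0
  · have h4 : ‖x‖ ^ 2 = 0 := by rw [hz]; ring
    rw [h4]; exact mul_nonneg (norm_nonneg _) (hpos x)
  · have hz' : 0 < ‖x‖ := lt_of_le_of_ne (norm_nonneg _) (Ne.symm hz)
    have h4 : ‖x‖ ^ 2 * ‖x‖ ^ 2 ≤ (‖Binv‖ * ⟪B x, x⟫) * ‖x‖ ^ 2 := by
      nlinarith [mul_le_mul_of_nonneg_left h3 (hpos x)]
    exact le_of_mul_le_mul_right h4 (pow_pos hz' 2)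

end myaux


section realaux

lemma my_arith_pos_add (A Bp C s2 : ℝ) (hcs : Bp ^ 2 ≤ A * C) (hCs : C ≤ s2 * A)
    (hs2 : s2 < 1) (hA0 : 0 ≤ A) (hC0 : 0 ≤ C) : 0 ≤ A + Bp := by
  have hBp2 : Bp ^ 2 ≤ A ^ 2 := by nlinarith
  nlinarith

lemma my_arith_key (A Bp C s2 : ℝ) (hCs : C ≤ s2 * A) (hs2 : s2 ≤ 1) (hA0 : 0 ≤ A) :
    (1 - s2) * (A * (A + 2 * Bp + C)) ≤ (A + Bp) ^ 2 := by
  have k1 : (0:ℝ) ≤ 1 - s2 := by linarith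
  have k2 : (0:ℝ) ≤ s2 * A - C := by linarith
  nlinarith [sq_nonneg (Bp + s2 * A), mul_nonneg (mul_nonneg k1 hA0) k2]

lemma my_arith_final (R r q N ωs ζ ω₁ : ℝ) (h1 : r ≤ (1 + ζ) * q)
    (h2 : ω₁ * (1 + ζ) + ζ ≤ ωs) (h3 : ωs * q ≤ N) (h4 : N ≤ R + ζ * q)
    (hq : 0 ≤ q) (hω₁ : 0 ≤ ω₁) : ω₁ * r ≤ R := by
  nlinarith [mul_le_mul_of_nonneg_left h1 hω₁, mul_le_mul_of_nonneg_right h2 hq]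

lemma my_arith_omega (ζ ω₁ ω : ℝ) (hζ0 : 0 ≤ ζ) (hζ : ζ < 1 / 2) (hω₁0 : 0 < ω₁)
    (h : (ω₁ * (1 - ζ) + ζ) / (1 - 2 * ζ) ≤ ω) : ω₁ * (1 + ζ) + ζ ≤ ω := by
  have h2ζ : 0 < 1 - 2 * ζ := by linarith
  have h9 : ω₁ * (1 + ζ) + ζ ≤ (ω₁ * (1 - ζ) + ζ) / (1 - 2 * ζ) := by
    rw [le_div_iff₀ h2ζ]
    nlinarith [sq_nonneg ζ, mul_nonneg hω₁0.le (sq_nonneg ζ)]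
  linarith

lemma my_sq_bound (c nb nB b : ℝ) (h1 : c ≤ nb * b) (h2 : nb ≤ nB * b)
    (hb : 0 ≤ b) : c ≤ nB * b ^ 2 := by nlinarith

lemma my_sq_le (x β sA : ℝ) (h : x ≤ β * sA) (hx : 0 ≤ x) (hβ : 0 ≤ β)
    (hsA : 0 ≤ sA) : x ^ 2 ≤ β ^ 2 * (sA * sA) := by nlinarith

lemma my_eq_zero (A s2 : ℝ) (h : A ≤ s2 * A) (h1 : s2 < 1) (h0 : 0 ≤ A) :
    A = 0 := by nlinarith

lemma my_norm_zero (x rB : ℝ) (h : rB * x ^ 2 ≤ 0) (hrB : 0 < rB) (hx : 0 ≤ x) :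
    x = 0 := by
  by_contra hne
  have hx' : 0 < x := lt_of_le_of_ne hx (Ne.symm hne)
  have h2 : 0 < rB * x ^ 2 := mul_pos hrB (pow_pos hx' 2)
  linarith

end realaux

set_option maxHeartbeats 3000000 in
/-- **Cardinality bound for inexact bulk chasing.**  With `B` bounded, self-adjoint
and elliptic on `H = ℓ²(𝒥)`, boundedly invertible with inverse `Binv`,
`κ(B) = ‖B‖·‖B⁻¹‖`, and `u = B⁻¹f`: let `ζ ∈ [0,1/2)`, `ω₁ ∈ (0,1)` and
`β ∈ (0, ‖B‖^{−1/2})` with `ω̂ = (ω₁(1−ζ)+ζ)/(1−2ζ) ≤ κ(B)^{−1/2}(1 − ‖B‖β²)^{1/2}`.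
Let `w ∈ H`, `Λ₀` finite with `supp w ⊆ Λ₀`, and `r` with `‖r − (Bw − f)‖ ≤ ζ‖Bw − f‖`.
Then for every finite `Λ̄` admitting `v` with `supp v ⊆ Λ̄` and `‖u − v‖ ≤ β‖u − w‖_B`,
the set `Λ̂ = Λ₀ ∪ Λ̄` satisfies `‖r|_{Λ̂}‖ ≥ ω₁‖r‖` and `#(Λ̂ \ Λ₀) ≤ #Λ̄`. -/
theorem stmt_18 {J : Type*} [Countable J] [DecidableEq J]
    (B Binv : lp (fun _ : J => ℝ) 2 →L[ℝ] lp (fun _ : J => ℝ) 2)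
    (rB RB : ℝ) (hrB : 0 < rB) (hrRB : rB ≤ RB)
    (hsa : ∀ x y, ⟪B x, y⟫ = ⟪x, B y⟫)
    (hell : ∀ v, rB * ‖v‖ ^ 2 ≤ ⟪B v, v⟫ ∧ ⟪B v, v⟫ ≤ RB * ‖v‖ ^ 2)
    (hinv1 : Binv.comp B = ContinuousLinearMap.id ℝ _)
    (hinv2 : B.comp Binv = ContinuousLinearMap.id ℝ _)
    (f u : lp (fun _ : J => ℝ) 2) (hu : B u = f)
    (ζ ω₁ β : ℝ) (hζ0 : 0 ≤ ζ) (hζ : ζ < 1 / 2)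
    (hω₁0 : 0 < ω₁) (hω₁1 : ω₁ < 1)
    (hβ0 : 0 < β) (hβ : β < (Real.sqrt ‖B‖)⁻¹)
    (hωhat : (ω₁ * (1 - ζ) + ζ) / (1 - 2 * ζ) ≤
      (Real.sqrt (‖B‖ * ‖Binv‖))⁻¹ * Real.sqrt (1 - ‖B‖ * β ^ 2))
    (w : lp (fun _ : J => ℝ) 2) (Λ₀ : Finset J)
    (hwsupp : ∀ i : J, i ∉ Λ₀ → w i = 0)
    (r : lp (fun _ : J => ℝ) 2)
    (hr : ‖r - (B w - f)‖ ≤ ζ * ‖B w - f‖) :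
    ∀ Λbar : Finset J,
      (∃ v : lp (fun _ : J => ℝ) 2, (∀ i : J, i ∉ Λbar → v i = 0) ∧
          ‖u - v‖ ≤ β * Real.sqrt ⟪B (u - w), u - w⟫) →
      ω₁ * ‖r‖ ≤ ‖restr (↑(Λ₀ ∪ Λbar)) r‖ ∧
      ((Λ₀ ∪ Λbar) \ Λ₀).card ≤ Λbar.card := by
  intro Λbar hex
  obtain ⟨v, hvsupp, hvb⟩ := hex
  have hcard : ((Λ₀ ∪ Λbar) \ Λ₀).card ≤ Λbar.card := by
    apply Finset.card_le_card
    intro i hi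
    simp only [Finset.mem_sdiff, Finset.mem_union] at hi
    tauto
  refine ⟨?_, hcard⟩
  have hpos : ∀ x, (0:ℝ) ≤ ⟪B x, x⟫ := fun x =>
    le_trans (by positivity) (hell x).1
  have hcs := my_form_cs B hsa hpos
  set Λ : Set J := ↑(Λ₀ ∪ Λbar) with hΛ
  set q := B w - f with hqdef
  set a := w - u with hadef
  set b := u - v with hbdef
  set z := w - v with hzdef
  have hqa : q = B a := by rw [hqdef, hadef, map_sub, hu]
  have hzab : z = a + b := by rw [hzdef, hadef, hbdef]; abel
  set A := ⟪B a, a⟫ with hAdef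
  set Bp := ⟪B a, b⟫ with hBpdef
  set C := ⟪B b, b⟫ with hCdef
  have hA0 : 0 ≤ A := hpos a
  have hC0 : 0 ≤ C := hpos b
  have hcsab : Bp ^ 2 ≤ A * C := hcs a b
  clear_value Λ q a b z A Bp C
  have hsq : 0 < Real.sqrt ‖B‖ := by
    have h : (0:ℝ) < (Real.sqrt ‖B‖)⁻¹ := lt_trans hβ0 hβ
    exact inv_pos.mp h
  have hBpos : 0 < ‖B‖ := Real.sqrt_pos.mp hsq
  have hsB : Real.sqrt ‖B‖ * Real.sqrt ‖B‖ = ‖B‖ :=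
    Real.mul_self_sqrt (norm_nonneg _)
  have hs2 : ‖B‖ * β ^ 2 < 1 := by
    have h1 : β * Real.sqrt ‖B‖ < 1 := by
      have h2 := mul_lt_mul_of_pos_right hβ hsq
      rwa [inv_mul_cancel₀ (ne_of_gt hsq)] at h2
    have h3 : (β * Real.sqrt ‖B‖) * (β * Real.sqrt ‖B‖) < 1 * 1 :=
      mul_lt_mul'' h1 h1 (by positivity) (by positivity)
    have h4 : (β * Real.sqrt ‖B‖) * (β * Real.sqrt ‖B‖) = ‖B‖ * β ^ 2 := by
      have h5 : (β * Real.sqrt ‖B‖) * (β * Real.sqrt ‖B‖) =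
          (Real.sqrt ‖B‖ * Real.sqrt ‖B‖) * β ^ 2 := by ring
      rw [h5, hsB]
    calc ‖B‖ * β ^ 2 = (β * Real.sqrt ‖B‖) * (β * Real.sqrt ‖B‖) := h4.symm
      _ < 1 * 1 := h3
      _ = 1 := one_mul 1
  set s2 := ‖B‖ * β ^ 2 with hs2def
  have hs20 : 0 ≤ s2 := by positivity
  clear_value s2
  have hBinvpos : 0 < ‖Binv‖ := by
    by_contra hcon
    push_neg at hcon
    have hBinv0 : ‖Binv‖ = 0 := le_antisymm hcon (norm_nonneg _)
    have hall : ∀ x : lp (fun _ : J => ℝ) 2, x = 0 := by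
      intro x
      have h : B (Binv x) = x := by
        have h0 := ContinuousLinearMap.ext_iff.mp hinv2 x
        simpa using h0
      have h1 : ‖Binv x‖ ≤ ‖Binv‖ * ‖x‖ := Binv.le_opNorm x
      rw [hBinv0, zero_mul] at h1
      have h2 : Binv x = 0 := norm_eq_zero.mp (le_antisymm h1 (norm_nonneg _))
      rw [h2, map_zero] at h
      exact h.symm
    have hB0 : ‖B‖ ≤ 0 := by
      refine ContinuousLinearMap.opNorm_le_bound _ le_rfl fun x => ?_
      rw [hall x]; simp
    exact absurd hB0 (not_le.mpr hBpos)
  have hz_supp : ∀ i ∉ Λ, z i = 0 := by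
    intro i hi
    rw [hΛ] at hi
    simp only [Finset.coe_union, Set.mem_union, Finset.mem_coe] at hi
    push_neg at hi
    have h1 : w i = 0 := hwsupp i hi.1
    have h2 : v i = 0 := hvsupp i hi.2
    have h3 : z i = w i - v i := by
      rw [hzdef]; rw [lp.coeFn_sub]; rfl
    rw [h3, h1, h2, sub_zero]
  have hb2 : ‖b‖ ^ 2 ≤ β ^ 2 * A := by
    have h1 : ⟪B (u - w), u - w⟫ = A := by
      have h2 : u - w = -a := by rw [hadef]; abel
      rw [h2, map_neg, inner_neg_neg, hAdef]
    rw [h1] at hvb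
    have hsA : Real.sqrt A * Real.sqrt A = A := Real.mul_self_sqrt hA0
    have h6 := my_sq_le (‖b‖) β (Real.sqrt A) hvb (norm_nonneg b) hβ0.le
      (Real.sqrt_nonneg A)
    rwa [hsA] at h6
  have hCb : C ≤ ‖B‖ * ‖b‖ ^ 2 := by
    rw [hCdef]
    exact my_sq_bound _ _ _ _ (real_inner_le_norm (B b) b) (B.le_opNorm b)
      (norm_nonneg b)
  have hCs : C ≤ s2 * A := by
    rw [hs2def]
    calc C ≤ ‖B‖ * ‖b‖ ^ 2 := hCb
      _ ≤ ‖B‖ * (β ^ 2 * A) := mul_le_mul_of_nonneg_left hb2 (norm_nonneg _)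
      _ = ‖B‖ * β ^ 2 * A := by ring
  set N := ‖restr Λ q‖ with hNdef
  have hN0 : 0 ≤ N := norm_nonneg _
  clear_value N
  have step2 : ⟪q, z⟫ = A + Bp := by
    rw [hqa, hzab, inner_add_right, hAdef, hBpdef]
  have step1 : A + Bp ≤ N * ‖z‖ := by
    rw [← step2, my_inner_restr Λ q z hz_supp, hNdef]
    exact real_inner_le_norm _ _
  have haBp : 0 ≤ A + Bp := my_arith_pos_add A Bp C s2 hcsab hCs hs2 hA0 hC0
  have key : (1 - s2) * (A * (A + 2 * Bp + C)) ≤ (A + Bp) ^ 2 :=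
    my_arith_key A Bp C s2 hCs hs2.le hA0
  have hzz : ⟪B z, z⟫ = A + 2 * Bp + C := by
    rw [hzab, map_add, inner_add_left, inner_add_right, inner_add_right]
    have hba : ⟪B b, a⟫ = Bp := by
      rw [hsa b a, real_inner_comm, hBpdef]
    rw [hba, ← hAdef, ← hBpdef, ← hCdef]; ring
  have hnz : ‖z‖ ^ 2 ≤ ‖Binv‖ * (A + 2 * Bp + C) := by
    have h := my_norm_sq_le_Binv B Binv hcs hpos hinv2 z
    rwa [hzz] at h
  have hqn : ‖q‖ ^ 2 ≤ ‖B‖ * A := by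
    have h := my_normBx_sq_le B hcs hpos a
    rw [← hAdef] at h
    rwa [← hqa] at h
  set ωstar := (Real.sqrt (‖B‖ * ‖Binv‖))⁻¹ * Real.sqrt (1 - s2)
    with hωsdef
  have hωs0 : 0 ≤ ωstar := by positivity
  clear_value ωstar
  have hprod : 0 < ‖B‖ * ‖Binv‖ := mul_pos hBpos hBinvpos
  have hP1 : (Real.sqrt (‖B‖ * ‖Binv‖)) ^ 2 = ‖B‖ * ‖Binv‖ :=
    Real.sq_sqrt hprod.le
  have hP2 : (Real.sqrt (1 - s2)) ^ 2 = 1 - s2 :=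
    Real.sq_sqrt (by rw [sub_nonneg]; exact hs2.le)
  have hωssq : ωstar ^ 2 * (‖B‖ * ‖Binv‖) = 1 - s2 := by
    have h5 : ((Real.sqrt (‖B‖ * ‖Binv‖))⁻¹) ^ 2 = (‖B‖ * ‖Binv‖)⁻¹ := by
      rw [inv_pow, hP1]
    rw [hωsdef, mul_pow, h5, hP2]
    rw [mul_comm ((‖B‖ * ‖Binv‖)⁻¹) (1 - s2), mul_assoc,
      inv_mul_cancel₀ hprod.ne', mul_one]
  have hT0 : 0 ≤ A + 2 * Bp + C := by rw [← hzz]; exact hpos z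
  have hqN : ωstar * ‖q‖ ≤ N := by
    by_cases hz0 : ‖z‖ = 0
    · have hz00 : z = 0 := norm_eq_zero.mp hz0
      have hab0 : a + b = 0 := by rw [← hzab, hz00]
      have hab : a = -b := eq_neg_of_add_eq_zero_left hab0
      have hAA : A ≤ s2 * A := by
        rw [hs2def]
        have h1 : A ≤ ‖B‖ * ‖a‖ ^ 2 := by
          rw [hAdef]
          exact my_sq_bound _ _ _ _ (real_inner_le_norm (B a) a)
            (B.le_opNorm a) (norm_nonneg a)
        have h2 : ‖a‖ = ‖b‖ := by rw [hab, norm_neg]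
        have h2' : ‖a‖ ^ 2 = ‖b‖ ^ 2 := by rw [h2]
        calc A ≤ ‖B‖ * ‖a‖ ^ 2 := h1
          _ = ‖B‖ * ‖b‖ ^ 2 := by rw [h2']
          _ ≤ ‖B‖ * (β ^ 2 * A) := by
              exact mul_le_mul_of_nonneg_left hb2 (norm_nonneg _)
          _ = ‖B‖ * β ^ 2 * A := by ring
      have hA00 : A = 0 := my_eq_zero A s2 hAA hs2 hA0
      have ha0 : a = 0 := by
        have h1 := (hell a).1
        rw [← hAdef, hA00] at h1
        exact norm_eq_zero.mp (my_norm_zero ‖a‖ rB h1 hrB (norm_nonneg a))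
      have hq0 : ‖q‖ = 0 := by rw [hqa, ha0, map_zero, norm_zero]
      rw [hq0, mul_zero]
      exact hN0
    · have hzpos : 0 < ‖z‖ := lt_of_le_of_ne (norm_nonneg _) (Ne.symm hz0)
      have e1 : (A + Bp) ^ 2 ≤ N ^ 2 * ‖z‖ ^ 2 := by
        have := pow_le_pow_left₀ haBp step1 2
        rwa [mul_pow] at this
      have e2 : (1 - s2) * (A * (A + 2 * Bp + C)) ≤ N ^ 2 * ‖z‖ ^ 2 :=
        le_trans key e1
      have e3 : ‖q‖ ^ 2 * ‖z‖ ^ 2 ≤ (‖B‖ * A) * (‖Binv‖ * (A + 2 * Bp + C)) :=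
        mul_le_mul hqn hnz (sq_nonneg _) (mul_nonneg (norm_nonneg _) hA0)
      have e4 : ωstar ^ 2 * (‖q‖ ^ 2 * ‖z‖ ^ 2) ≤
          (1 - s2) * (A * (A + 2 * Bp + C)) := by
        have h6 : ωstar ^ 2 * ((‖B‖ * A) * (‖Binv‖ * (A + 2 * Bp + C))) =
            (ωstar ^ 2 * (‖B‖ * ‖Binv‖)) * (A * (A + 2 * Bp + C)) := by ring
        calc ωstar ^ 2 * (‖q‖ ^ 2 * ‖z‖ ^ 2)
            ≤ ωstar ^ 2 * ((‖B‖ * A) * (‖Binv‖ * (A + 2 * Bp + C))) :=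
              mul_le_mul_of_nonneg_left e3 (sq_nonneg _)
          _ = (ωstar ^ 2 * (‖B‖ * ‖Binv‖)) * (A * (A + 2 * Bp + C)) := h6
          _ = (1 - s2) * (A * (A + 2 * Bp + C)) := by rw [hωssq]
      have e5 : (ωstar * ‖q‖) ^ 2 * ‖z‖ ^ 2 ≤ N ^ 2 * ‖z‖ ^ 2 := by
        have : (ωstar * ‖q‖) ^ 2 * ‖z‖ ^ 2 = ωstar ^ 2 * (‖q‖ ^ 2 * ‖z‖ ^ 2) := by
          ring
        rw [this]
        exact le_trans e4 e2
      have e6 : (ωstar * ‖q‖) ^ 2 ≤ N ^ 2 :=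
        le_of_mul_le_mul_right e5 (pow_pos hzpos 2)
      exact (pow_le_pow_iff_left₀ (mul_nonneg hωs0 (norm_nonneg q)) hN0
        (by norm_num)).mp e6
  have hNle : N ≤ ‖restr Λ r‖ + ζ * ‖q‖ := by
    have hdecomp : restr Λ q = restr Λ r + restr Λ (q - r) := by
      rw [← my_restr_add]
      congr 1
      abel
    have h7 : ‖q - r‖ = ‖r - q‖ := norm_sub_rev _ _
    calc N = ‖restr Λ r + restr Λ (q - r)‖ := by rw [hNdef, hdecomp]
      _ ≤ ‖restr Λ r‖ + ‖restr Λ (q - r)‖ := norm_add_le _ _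
      _ ≤ ‖restr Λ r‖ + ‖q - r‖ :=
          add_le_add le_rfl (my_norm_restr_le Λ (q - r))
      _ ≤ ‖restr Λ r‖ + ζ * ‖q‖ := by rw [h7]; exact add_le_add le_rfl hr
  have hrn : ‖r‖ ≤ (1 + ζ) * ‖q‖ := by
    have h8 := norm_add_le (r - q) q
    rw [sub_add_cancel] at h8
    have h9 : (1 + ζ) * ‖q‖ = ζ * ‖q‖ + ‖q‖ := by ring
    rw [h9]
    exact le_trans h8 (add_le_add hr le_rfl)
  have hωhat2 : ω₁ * (1 + ζ) + ζ ≤ ωstar :=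
    my_arith_omega ζ ω₁ ωstar hζ0 hζ hω₁0 hωhat
  exact my_arith_final (‖restr Λ r‖) (‖r‖) (‖q‖) N ωstar ζ ω₁ hrn hωhat2 hqN
    hNle (norm_nonneg _) hω₁0.le
end

section
/- Validity of the residual-approximation stopping criterion: Let X be a real normed space and g, r̂, r ∈ X. Let η ≥ 0 and 0 ≤ ζ̂ < ζ. If ‖r̂ − g‖ ≤ η, ‖r̂ − r‖ ≤ ζ̂‖r̂‖, and (1+ζ)·η ≤ (ζ − ζ̂)·‖r̂‖, then ‖r − g‖ ≤ ζ‖g‖. -/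
/-- **Validity of the residual-approximation stopping criterion.**
Let `X` be a real normed space and `g, r̂, r ∈ X`. Let `η ≥ 0` and `0 ≤ ζ̂ < ζ`.
If `‖r̂ − g‖ ≤ η`, `‖r̂ − r‖ ≤ ζ̂‖r̂‖`, and `(1+ζ)·η ≤ (ζ − ζ̂)·‖r̂‖`,
then `‖r − g‖ ≤ ζ‖g‖`. -/
theorem stmt_19 {X : Type*} [NormedAddCommGroup X] [NormedSpace ℝ X]
    (g rhat r : X) (η ζhat ζ : ℝ)
    (hη : 0 ≤ η) (hζhat : 0 ≤ ζhat) (hζ : ζhat < ζ)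
    (h1 : ‖rhat - g‖ ≤ η)
    (h2 : ‖rhat - r‖ ≤ ζhat * ‖rhat‖)
    (h3 : (1 + ζ) * η ≤ (ζ - ζhat) * ‖rhat‖) :
    ‖r - g‖ ≤ ζ * ‖g‖ := by
  have t1 : ‖r - g‖ ≤ ‖r - rhat‖ + ‖rhat - g‖ := norm_sub_le_norm_sub_add_norm_sub r rhat g
  have t2 : ‖r - rhat‖ = ‖rhat - r‖ := norm_sub_rev r rhat
  have t3 : ‖rhat‖ - ‖g‖ ≤ ‖rhat - g‖ := norm_sub_norm_le rhat g
  nlinarith [hζhat.trans_lt hζ]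
end
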